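/- In a symmetric Frobenius algebra A, the element κ := ∑_{a,b ∈ B} a b a^∨ b^∨ lies in the center of A. -/

import Mathlib

section Aux
variable {k A : Type*} [Field k] [Ring A] [Algebra k A]
    {ι : Type*} [Fintype ι] [DecidableEq ι]

theorem expB (B : Module.Basis ι k A) (tr : A →ₗ[k] k) (d : ι → A)
    (hd : ∀ i j, tr (d i * B j) = if i = j then 1 else 0)
    (a : A) : ∑ j, tr (d j * a) • B j = a := by
  have h : ∀ j, tr (d j * a) = B.repr a j := by
    intro j
    conv_lhs => rw [← B.sum_repr a]
    rw [Finset.mul_sum, map_sum]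
    simp [mul_smul_comm, hd]
  simp only [h]
  exact B.sum_repr a

theorem expd (B : Module.Basis ι k A) (tr : A →ₗ[k] k) (d : ι → A)
    (hnd : ∀ a : A, (∀ b : A, tr (a * b) = 0) → a = 0)
    (hd : ∀ i j, tr (d i * B j) = if i = j then 1 else 0)
    (a : A) : ∑ j, tr (a * B j) • d j = a := by
  set s := ∑ j, tr (a * B j) • d j with hs
  have hm : ∀ m, tr ((a - s) * B m) = 0 := by
    intro m
    rw [sub_mul, map_sub, hs, Finset.sum_mul, map_sum]
    simp [smul_mul_assoc, hd, mul_ite]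
  have hb : ∀ b : A, tr ((a - s) * b) = 0 := by
    intro b
    conv_lhs => rw [← B.sum_repr b, Finset.mul_sum, map_sum]
    simp [mul_smul_comm, hm]
  exact (sub_eq_zero.mp (hnd _ hb)).symm

theorem Tlin (B : Module.Basis ι k A) (d : ι → A) (c : ι → k) (y' : ι → A) :
    ∑ j, c j • (∑ i, B i * y' j * d i) = ∑ i, B i * (∑ j, c j • y' j) * d i := by
  simp only [Finset.smul_sum, Finset.mul_sum, Finset.sum_mul, mul_smul_comm, smul_mul_assoc]
  rw [Finset.sum_comm]

theorem lemL (B : Module.Basis ι k A) (tr : A →ₗ[k] k) (d : ι → A)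
    (hnd : ∀ a : A, (∀ b : A, tr (a * b) = 0) → a = 0)
    (hd : ∀ i j, tr (d i * B j) = if i = j then 1 else 0)
    (y x : A) :
    (∑ i, B i * y * d i) * x = x * (∑ i, B i * y * d i) := by
  have k1 : ∀ i, (B i * y * d i) * x = ∑ m, tr (d i * x * B m) • (B i * y * d m) := by
    intro i
    conv_lhs => rw [mul_assoc, ← expd B tr d hnd hd (d i * x)]
    rw [Finset.mul_sum]
    simp only [mul_smul_comm]
  have k2 : ∀ i, x * (B i * y * d i) = ∑ m, tr (d m * (x * B i)) • (B m * y * d i) := by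
    intro i
    conv_lhs => rw [show x * (B i * y * d i) = (x * B i) * y * d i by
                      simp only [mul_assoc],
                    ← expB B tr d hd (x * B i)]
    rw [Finset.sum_mul, Finset.sum_mul]
    simp only [smul_mul_assoc]
  rw [Finset.sum_mul, Finset.mul_sum]
  simp only [k1, k2]
  rw [Finset.sum_comm]
  refine Finset.sum_congr rfl fun i _ => Finset.sum_congr rfl fun m _ => ?_
  have hc : d m * x * B i = d m * (x * B i) := by rw [mul_assoc]
  rw [hc]

theorem lemM (B : Module.Basis ι k A) (tr : A →ₗ[k] k) (d : ι → A)
    (hsym : ∀ a b : A, tr (a * b) = tr (b * a))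
    (hnd : ∀ a : A, (∀ b : A, tr (a * b) = 0) → a = 0)
    (hd : ∀ i j, tr (d i * B j) = if i = j then 1 else 0)
    (x y : A) :
    ∑ i, B i * (x * y) * d i = ∑ i, B i * y * (x * d i) := by
  have k1 : ∀ i, B i * (x * y) * d i = ∑ m, tr (d m * (B i * x)) • (B m * y * d i) := by
    intro i
    conv_lhs => rw [show B i * (x * y) * d i = (B i * x) * y * d i by
                      simp only [mul_assoc],
                    ← expB B tr d hd (B i * x)]
    rw [Finset.sum_mul, Finset.sum_mul]
    simp only [smul_mul_assoc]
  have k2 : ∀ i, B i * y * (x * d i) = ∑ m, tr (x * d i * B m) • (B i * y * d m) := by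
    intro i
    conv_lhs => rw [← expd B tr d hnd hd (x * d i)]
    rw [Finset.mul_sum]
    simp only [mul_smul_comm]
  simp only [k1, k2]
  rw [Finset.sum_comm]
  refine Finset.sum_congr rfl fun i _ => Finset.sum_congr rfl fun m _ => ?_
  have hc : tr (d i * (B m * x)) = tr (x * d i * B m) := by
    rw [← mul_assoc, hsym (d i * B m) x, ← mul_assoc]
  rw [hc]

end Aux

/-- In a symmetric Frobenius algebra, `κ = ∑_{a,b∈B} a b a^∨ b^∨` is central. -/
theorem stmt6 {k A : Type*} [Field k] [Ring A] [Algebra k A]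
    {ι : Type*} [Fintype ι] [DecidableEq ι]
    (B : Module.Basis ι k A)
    (tr : A →ₗ[k] k)
    (hsym : ∀ a b : A, tr (a * b) = tr (b * a))
    (hnd : ∀ a : A, (∀ b : A, tr (a * b) = 0) → a = 0)
    (d : ι → A)
    (hd : ∀ i j, tr (d i * B j) = if i = j then 1 else 0)
    (x : A) :
    (∑ i, ∑ j, B i * B j * d i * d j) * x = x * (∑ i, ∑ j, B i * B j * d i * d j) := by
  -- rewrite κ as ∑ j, T(B j) * d j where T y = ∑ i, B i * y * d i
  have hκ : (∑ i, ∑ j, B i * B j * d i * d j)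
      = ∑ j, (∑ i, B i * B j * d i) * d j := by
    rw [Finset.sum_comm]
    refine Finset.sum_congr rfl fun j _ => ?_
    rw [Finset.sum_mul]
  rw [hκ]
  -- Step A : κ * x = ∑ m, T (x * B m) * d m
  have hA : (∑ j, (∑ i, B i * B j * d i) * d j) * x
      = ∑ m, (∑ i, B i * (x * B m) * d i) * d m := by
    rw [Finset.sum_mul]
    have e1 : ∀ j, ((∑ i, B i * B j * d i) * d j) * x
        = ∑ m, tr (d j * x * B m) • ((∑ i, B i * B j * d i) * d m) := by
      intro j
      conv_lhs => rw [mul_assoc, ← expd B tr d hnd hd (d j * x)]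
      rw [Finset.mul_sum]
      simp only [mul_smul_comm]
    simp only [e1]
    rw [Finset.sum_comm]
    refine Finset.sum_congr rfl fun m _ => ?_
    have e2 : ∑ j, tr (d j * x * B m) • ((∑ i, B i * B j * d i) * d m)
        = (∑ j, tr (d j * (x * B m)) • (∑ i, B i * B j * d i)) * d m := by
      rw [Finset.sum_mul]
      refine Finset.sum_congr rfl fun j _ => ?_
      rw [smul_mul_assoc, mul_assoc]
    rw [e2, Tlin B d (fun j => tr (d j * (x * B m))) (fun j => B j),
        expB B tr d hd (x * B m)]
  -- Step B : x * κ = ∑ m, T (B m * x) * d m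
  have hB : x * (∑ j, (∑ i, B i * B j * d i) * d j)
      = ∑ m, (∑ i, B i * (B m * x) * d i) * d m := by
    rw [Finset.mul_sum]
    have e0 : ∀ j, x * ((∑ i, B i * B j * d i) * d j)
        = (∑ i, B i * B j * d i) * (x * d j) := by
      intro j
      rw [← mul_assoc, ← lemL B tr d hnd hd (B j) x, mul_assoc]
    have e1 : ∀ j, (∑ i, B i * B j * d i) * (x * d j)
        = ∑ m, tr (d j * (B m * x)) • ((∑ i, B i * B j * d i) * d m) := by
      intro j
      conv_lhs => rw [← expd B tr d hnd hd (x * d j)]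
      rw [Finset.mul_sum]
      refine Finset.sum_congr rfl fun m _ => ?_
      rw [mul_smul_comm]
      have hc : tr (x * d j * B m) = tr (d j * (B m * x)) := by
        rw [mul_assoc, hsym x (d j * B m), mul_assoc]
      rw [hc]
    simp only [e0, e1]
    rw [Finset.sum_comm]
    refine Finset.sum_congr rfl fun m _ => ?_
    have e2 : ∑ j, tr (d j * (B m * x)) • ((∑ i, B i * B j * d i) * d m)
        = (∑ j, tr (d j * (B m * x)) • (∑ i, B i * B j * d i)) * d m := by
      rw [Finset.sum_mul]
      refine Finset.sum_congr rfl fun j _ => ?_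
      rw [smul_mul_assoc]
    rw [e2, Tlin B d (fun j => tr (d j * (B m * x))) (fun j => B j),
        expB B tr d hd (B m * x)]
  rw [hA, hB]
  -- Step C : T (x * B m) = T (B m * x)
  refine Finset.sum_congr rfl fun m _ => ?_
  congr 1
  calc ∑ i, B i * (x * B m) * d i
      = ∑ i, B i * B m * (x * d i) := lemM B tr d hsym hnd hd x (B m)
    _ = ∑ i, B i * (B m * x) * d i := by
        refine Finset.sum_congr rfl fun i _ => ?_
        simp only [mul_assoc]
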